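/- Let Γ = A*_φ and let x, y ∈ Γ be commuting elements with x ∈ C_{+1} ∪ C_{-1}, and let y have reduced form y = y_1 t^{ε_1} y_2 ⋯ y_n t^{ε_n} y_{n+1}. Then there exists a sequence (c_0, c_1, …, c_{2n+1}) of elements of C_{+1} ∪ C_{-1} with c_0 = c_{2n+1} = x such that for each i, c_i and c_{i+1} are conjugate: by y_{i/2 + 1} when i is even, and by t^{ε_j} with j = (i−1)/2 + 1 when i is odd. -/

import Mathlib

/-!
Internal characterization of the HNN extension `Γ = A*_φ`:
`A` is a subgroup of `Γ`, `t ∈ Γ` is the stable letter, `Cm = C_{-1}` and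
`Cp = C_{+1}` are subgroups of `A` with `t⁻¹ Cm t = Cp` (so
`φ(c) = t⁻¹ c t` for `c ∈ Cm`), `A ∪ {t}` generates `Γ`, and Britton's lemma
holds: a reduced word `g₀ t^{ε₁} g₁ ⋯ t^{εₙ} gₙ` with `n ≥ 1` is nontrivial.
-/

variable {Γ : Type*} [Group Γ]

/-- The subgroup `C_ε` : `C_{+1} = Cp` when `ε = 1`, and `C_{-1} = Cm`
otherwise. -/
def toCsub (Cm Cp : Subgroup Γ) (ε : ℤ) : Subgroup Γ := if ε = 1 then Cp else Cm

/-- The pair `(g₀, [(ε₁, g₁), …, (εₙ, gₙ)])` encodes the word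
`g₀ t^{ε₁} g₁ ⋯ t^{εₙ} gₙ`; it is reduced when all `gᵢ ∈ A`, all `εᵢ = ±1`,
and it contains no pinch `t^{εᵢ} gᵢ t^{-εᵢ}` with `gᵢ ∈ C_{εᵢ}`. -/
def HNNReducedWord (A Cm Cp : Subgroup Γ) (g₀ : Γ) (w : List (ℤ × Γ)) : Prop :=
  g₀ ∈ A ∧ (∀ p ∈ w, (p.1 = 1 ∨ p.1 = -1) ∧ p.2 ∈ A) ∧
    w.Chain' fun p q => q.1 = -p.1 → p.2 ∉ toCsub Cm Cp p.1

/-- The element of `Γ` represented by the word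
`g₀ t^{ε₁} g₁ ⋯ t^{εₙ} gₙ`. -/
def hnnProd (t g₀ : Γ) (w : List (ℤ × Γ)) : Γ :=
  g₀ * (w.map fun p => t ^ p.1 * p.2).prod

/-- `Γ` is the HNN extension of its subgroup `A` relative to the isomorphism
`φ : Cm → Cp`, `φ(c) = t⁻¹ c t`, with stable letter `t`. -/
def IsHNN (A Cm Cp : Subgroup Γ) (t : Γ) : Prop :=
  Cm ≤ A ∧ Cp ≤ A ∧ (∀ c : Γ, c ∈ Cm ↔ t⁻¹ * c * t ∈ Cp) ∧
    Subgroup.closure ((A : Set Γ) ∪ {t}) = ⊤ ∧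
    ∀ g₀ w, HNNReducedWord A Cm Cp g₀ w → w ≠ [] → hnnProd t g₀ w ≠ 1

/-- `g` is cyclically reduced: `g ∈ A` (length 1), or `g` has a reduced form
`g₁ t^{ε₁} g₂ ⋯ gₙ t^{εₙ} gₙ₊₁` with `gₙ₊₁ = 1` and either `n = 1` or
`t^{εₙ} g₁ t^{ε₁}` is not a pinch. -/
def HNNCyclicallyReduced (A Cm Cp : Subgroup Γ) (t g : Γ) : Prop :=
  g ∈ A ∨
    ∃ g₀ w, HNNReducedWord A Cm Cp g₀ w ∧ hnnProd t g₀ w = g ∧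
      ∃ p q, w.head? = some q ∧ w.getLast? = some p ∧ p.2 = 1 ∧
        (w.length = 1 ∨ ¬(q.1 = -p.1 ∧ g₀ ∈ toCsub Cm Cp p.1))

/- Auxiliary lemmas -/
lemma toCsub_subset_union (Cm Cp : Subgroup Γ) (e : ℤ) :
    (toCsub Cm Cp e : Set Γ) ⊆ (Cp : Set Γ) ∪ (Cm : Set Γ) := by
  unfold toCsub; split_ifs
  · exact Set.subset_union_left
  · exact Set.subset_union_right

lemma union_mem_A {A Cm Cp : Subgroup Γ} (hm : Cm ≤ A) (hp : Cp ≤ A) {x : Γ}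
    (hx : x ∈ (Cp : Set Γ) ∪ (Cm : Set Γ)) : x ∈ A := by
  rcases hx with h | h
  · exact hp h
  · exact hm h

lemma conj_toCsub {Cm Cp : Subgroup Γ} {t : Γ}
    (hc : ∀ c : Γ, c ∈ Cm ↔ t⁻¹ * c * t ∈ Cp) {e : ℤ} (he : e = 1 ∨ e = -1)
    {a : Γ} (ha : a ∈ toCsub Cm Cp (-e)) : (t ^ e)⁻¹ * a * t ^ e ∈ toCsub Cm Cp e := by
  rcases he with rfl | rfl
  · simp only [toCsub, if_pos rfl] at *
    have ha' : a ∈ Cm := by simpa [toCsub] using ha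
    simpa using (hc a).1 ha'
  · have ha' : a ∈ Cp := by simpa [toCsub] using ha
    have : t⁻¹ * (t * a * t⁻¹) * t ∈ Cp := by
      have : t⁻¹ * (t * a * t⁻¹) * t = a := by group
      rw [this]; exact ha'
    have h2 : t * a * t⁻¹ ∈ Cm := (hc _).2 this
    simpa [toCsub, zpow_neg, mul_assoc] using h2

/-- inverse word: `hnnInvAux r` represents the inverse of the word `r.reverse`. -/
def hnnInvAux : List (ℤ × Γ) → Γ × List (ℤ × Γ)
  | [] => (1, [])
  | (e, g) :: r => (g⁻¹, (-e, (hnnInvAux r).1) :: (hnnInvAux r).2)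

lemma hnnInvAux_prod (t : Γ) : ∀ r : List (ℤ × Γ),
    (hnnInvAux r).1 * (((hnnInvAux r).2).map fun p => t ^ p.1 * p.2).prod
      = ((r.reverse.map fun p => t ^ p.1 * p.2).prod)⁻¹
  | [] => by simp [hnnInvAux]
  | (e, g) :: r => by
    have IH := hnnInvAux_prod t r
    simp only [hnnInvAux, List.map_cons, List.prod_cons, List.reverse_cons,
      List.map_append, List.prod_append, List.map_nil, List.prod_nil,
      mul_inv_rev, mul_one]
    rw [show g⁻¹ * (t ^ (-e) * (hnnInvAux r).1 *
        (((hnnInvAux r).2).map fun p => t ^ p.1 * p.2).prod) =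
        g⁻¹ * t ^ (-e) * ((hnnInvAux r).1 *
        (((hnnInvAux r).2).map fun p => t ^ p.1 * p.2).prod) by group, IH]
    group

lemma hnnInvAux_entries {A : Subgroup Γ} : ∀ r : List (ℤ × Γ),
    (∀ p ∈ r, (p.1 = 1 ∨ p.1 = -1) ∧ p.2 ∈ A) →
    (hnnInvAux r).1 ∈ A ∧ ∀ p ∈ (hnnInvAux r).2, (p.1 = 1 ∨ p.1 = -1) ∧ p.2 ∈ A
  | [], _ => ⟨A.one_mem, by simp [hnnInvAux]⟩
  | (e, g) :: r, h => by
    have IH := hnnInvAux_entries r (fun p hp => h p (List.mem_cons_of_mem _ hp))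
    have he := h (e, g) (List.mem_cons_self)
    refine ⟨A.inv_mem he.2, ?_⟩
    intro p hp
    simp only [hnnInvAux, List.mem_cons] at hp
    rcases hp with rfl | hp
    · exact ⟨by rcases he.1 with h1 | h1 <;> simp at h1 <;> omega, IH.1⟩
    · exact IH.2 p hp

lemma hnnInvAux_chain (Cm Cp : Subgroup Γ) : ∀ r : List (ℤ × Γ),
    r.Chain' (fun p q : ℤ × Γ => p.1 = -q.1 → q.2 ∉ toCsub Cm Cp q.1) →
    ((hnnInvAux r).2).Chain' fun p q => q.1 = -p.1 → p.2 ∉ toCsub Cm Cp p.1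
  | [], _ => by simp [hnnInvAux]; exact List.IsChain.nil
  | [(e, g)], _ => by simp [hnnInvAux]; exact List.IsChain.singleton _
  | (e, g) :: (e', g') :: r, hch => by
    have IH := hnnInvAux_chain Cm Cp ((e', g') :: r) (List.isChain_cons_cons.1 hch).2
    refine List.isChain_cons_cons.2 ⟨?_, IH⟩
    intro hee
    have hrel := (List.isChain_cons_cons.1 hch).1
    simp only [hnnInvAux] at hee ⊢
    -- hee : -e' = -(-e), i.e. e' = -e
    have he' : e' = -e := by omega
    have := hrel (by omega : e = -e')
    rw [show -e = e' from by omega]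
    intro hmem
    exact this ((toCsub Cm Cp e').inv_mem_iff.1 hmem)

lemma hnnInvAux_getLast : ∀ (r : List (ℤ × Γ)) (e : ℤ) (g : Γ),
    r.getLast? = some (e, g) →
    ((hnnInvAux r).2).getLast? = some (-e, (1 : Γ))
  | [], _, _, h => by simp at h
  | [(e', g')], e, g, h => by
    simp at h
    simp [hnnInvAux, h.1]
  | (e', g') :: (e'', g'') :: r, e, g, h => by
    rw [List.getLast?_cons_cons] at h
    have IH := hnnInvAux_getLast ((e'', g'') :: r) e g h
    simp only [hnnInvAux] at IH ⊢
    rw [List.getLast?_cons_cons]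
    exact IH

lemma hnn_not_in_A {A Cm Cp : Subgroup Γ} {t : Γ} (hH : IsHNN A Cm Cp t)
    {g₀ : Γ} {w : List (ℤ × Γ)} (hred : HNNReducedWord A Cm Cp g₀ w)
    (hne : w ≠ []) : hnnProd t g₀ w ∉ A := by
  intro hA
  refine hH.2.2.2.2 ((hnnProd t g₀ w)⁻¹ * g₀) w
    ⟨A.mul_mem (A.inv_mem hA) hred.1, hred.2.1, hred.2.2⟩ hne ?_
  simp only [hnnProd] at *
  group

lemma hnn_key {A Cm Cp : Subgroup Γ} {t : Γ} (hH : IsHNN A Cm Cp t)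
    (g₀ : Γ) (e0 : ℤ) (h0 : Γ) (w' : List (ℤ × Γ))
    (hred : HNNReducedWord A Cm Cp g₀ ((e0, h0) :: w'))
    (u v : Γ) (hu : u ∈ A) (hv : v ∈ A)
    (heq : u * hnnProd t g₀ ((e0, h0) :: w') = hnnProd t g₀ ((e0, h0) :: w') * v) :
    g₀⁻¹ * u * g₀ ∈ toCsub Cm Cp (-e0) := by
  by_contra hna
  set a : Γ := g₀⁻¹ * u * g₀ with ha_def
  set w : List (ℤ × Γ) := (e0, h0) :: w' with hw
  set r : List (ℤ × Γ) := w.reverse with hr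
  set h : Γ := (hnnInvAux r).1 with hh
  set l : List (ℤ × Γ) := (hnnInvAux r).2 with hl
  -- entries of r
  have hrent : ∀ p ∈ r, (p.1 = 1 ∨ p.1 = -1) ∧ p.2 ∈ A := by
    intro p hp; exact hred.2.1 p (by simpa [hr] using hp)
  -- flipped chain on r
  have hrch : r.Chain' (fun p q : ℤ × Γ => p.1 = -q.1 → q.2 ∉ toCsub Cm Cp q.1) := by
    rw [hr]
    exact List.isChain_reverse.2 hred.2.2
  have hent := hnnInvAux_entries (A := A) r hrent
  have hch := hnnInvAux_chain Cm Cp r hrch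
  rw [← hl] at hch
  have hentl : ∀ p ∈ l, (p.1 = 1 ∨ p.1 = -1) ∧ p.2 ∈ A := by
    rw [hl]; exact hent.2
  have hplast : l.getLast? = some (-e0, (1 : Γ)) :=
    hnnInvAux_getLast r e0 h0 (by rw [hr, List.getLast?_reverse, hw]; rfl)
  -- decompose l
  obtain hnil | ⟨l₀, b, hl0⟩ := List.eq_nil_or_concat l
  · rw [hnil] at hplast; simp at hplast
  rw [List.concat_eq_append] at hl0
  have hb : b = (-e0, (1 : Γ)) := by
    rw [hl0, List.getLast?_concat] at hplast
    exact Option.some.inj hplast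
  subst hb
  -- the big word
  set L : List (ℤ × Γ) := l₀ ++ (-e0, a) :: (e0, h0) :: w' with hL
  have he0 : e0 = 1 ∨ e0 = -1 := (hred.2.1 (e0, h0) (List.mem_cons_self)).1
  have haA : a ∈ A := A.mul_mem (A.mul_mem (A.inv_mem hred.1) hu) hred.1
  -- reducedness of (h, L)
  have hLred : HNNReducedWord A Cm Cp h L := by
    refine ⟨hent.1, ?_, ?_⟩
    · intro p hp
      rw [hL, List.mem_append, List.mem_cons, List.mem_cons] at hp
      rcases hp with hp | rfl | rfl | hp
      · exact hentl p (by rw [hl0]; exact List.mem_append_left _ hp)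
      · exact ⟨by omega, haA⟩
      · exact ⟨he0, (hred.2.1 (e0, h0) (List.mem_cons_self)).2⟩
      · exact hred.2.1 p (List.mem_cons_of_mem _ hp)
    · rw [hL]; show List.IsChain _ _; rw [List.isChain_append]
      refine ⟨?_, ?_, ?_⟩
      · -- chain of l₀
        rw [hl0] at hch; change List.IsChain _ _ at hch; rw [List.isChain_append] at hch
        exact hch.1
      · -- chain of middle+tail
        refine List.isChain_cons_cons.2 ⟨fun _ => hna, ?_⟩
        exact hred.2.2
      · -- junction
        intro p hp q hq
        rw [hl0] at hch; change List.IsChain _ _ at hch; rw [List.isChain_append] at hch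
        have := hch.2.2 p hp (-e0, (1 : Γ)) (by simp)
        simp only [List.head?_cons, Option.mem_def, Option.some.injEq] at hq
        subst hq
        exact this
  -- product of (h, L) equals v
  have hLne : L ≠ [] := by simp [hL]
  have hprodinv := hnnInvAux_prod t r
  rw [← hh, ← hl] at hprodinv
  rw [hr, List.reverse_reverse] at hprodinv
  -- hprodinv : h * (l.map f).prod = ((w.map f).prod)⁻¹
  have hLprod : hnnProd t h L = v := by
    have hPl : (l.map fun p => t ^ p.1 * p.2).prod
        = (l₀.map fun p => t ^ p.1 * p.2).prod * (t ^ (-e0) * 1) := by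
      rw [hl0]; simp
    have hPw : (w.map fun p => t ^ p.1 * p.2).prod
        = (t ^ e0 * h0) * (w'.map fun p => t ^ p.1 * p.2).prod := by
      rw [hw]; simp
    rw [hPl, hPw] at hprodinv
    set Pl₀ : Γ := (l₀.map fun p => t ^ p.1 * p.2).prod with hPl₀
    set Pw' : Γ := (w'.map fun p => t ^ p.1 * p.2).prod with hPw'
    -- hprodinv : h * (Pl₀ * (t ^ (-e0) * 1)) = (t ^ e0 * h0 * Pw')⁻¹
    have hkey : h * Pl₀ * t ^ (-e0) = (t ^ e0 * h0 * Pw')⁻¹ := by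
      rw [← hprodinv]; group
    have hv2 : v = (g₀ * (t ^ e0 * h0 * Pw'))⁻¹ * u * (g₀ * (t ^ e0 * h0 * Pw')) := by
      have heq' : u * (g₀ * (t ^ e0 * h0 * Pw')) = (g₀ * (t ^ e0 * h0 * Pw')) * v := by
        simpa [hnnProd, hw, mul_assoc] using heq
      rw [mul_assoc, heq']
      group
    have hPL : hnnProd t h L
        = (h * Pl₀ * t ^ (-e0)) * a * (t ^ e0 * h0 * Pw') := by
      simp only [hnnProd, hL, List.map_append, List.prod_append, List.map_cons,
        List.prod_cons, ← hPl₀, ← hPw']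
      group
    rw [hPL, hkey, hv2, ha_def]
    group
  exact hnn_not_in_A hH hLred hLne (hLprod ▸ hv)

lemma hnn_chain_aux {A Cm Cp : Subgroup Γ} {t : Γ} (hH : IsHNN A Cm Cp t) :
    ∀ (w : List (ℤ × Γ)) (g₀ u v : Γ), HNNReducedWord A Cm Cp g₀ w →
      u ∈ (Cp : Set Γ) ∪ (Cm : Set Γ) → v ∈ (Cp : Set Γ) ∪ (Cm : Set Γ) →
      u * hnnProd t g₀ w = hnnProd t g₀ w * v →
      ∃ c : ℕ → Γ, (∀ i ≤ 2 * w.length + 1, c i ∈ (Cp : Set Γ) ∪ (Cm : Set Γ)) ∧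
        c 0 = u ∧ c (2 * w.length + 1) = v ∧ c 0 = g₀ * c 1 * g₀⁻¹ ∧
        ∀ (j : ℕ) (hj : j < w.length),
          c (2 * j + 1) = t ^ (w.get ⟨j, hj⟩).1 * c (2 * j + 2) * (t ^ (w.get ⟨j, hj⟩).1)⁻¹ ∧
          c (2 * j + 2) = (w.get ⟨j, hj⟩).2 * c (2 * j + 3) * ((w.get ⟨j, hj⟩).2)⁻¹
  | [], g₀, u, v, hred, hu, hv, heq => by
    refine ⟨fun i => if i = 0 then u else v, ?_, by simp, by simp, ?_, by simp⟩
    · intro i _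
      by_cases h : i = 0 <;> simp [h, hu, hv]
    · simp only [List.length_nil, if_pos rfl]
      have : u * g₀ = g₀ * v := by simpa [hnnProd] using heq
      simp only [show (1 : ℕ) ≠ 0 by omega, if_neg, reduceIte]
      rw [← this]; group
  | (e0, h0) :: w', g₀, u, v, hred, hu, hv, heq => by
    have huA : u ∈ A := union_mem_A hH.1 hH.2.1 hu
    have hvA : v ∈ A := union_mem_A hH.1 hH.2.1 hv
    have ha : g₀⁻¹ * u * g₀ ∈ toCsub Cm Cp (-e0) :=
      hnn_key hH g₀ e0 h0 w' hred u v huA hvA heq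
    set a : Γ := g₀⁻¹ * u * g₀ with ha_def
    have he0 : e0 = 1 ∨ e0 = -1 := (hred.2.1 (e0, h0) (List.mem_cons_self)).1
    set x' : Γ := (t ^ e0)⁻¹ * a * t ^ e0 with hx'_def
    have hx' : x' ∈ toCsub Cm Cp e0 := conj_toCsub hH.2.2.1 he0 ha
    have hx'u : x' ∈ (Cp : Set Γ) ∪ (Cm : Set Γ) := toCsub_subset_union Cm Cp e0 hx'
    have hredtail : HNNReducedWord A Cm Cp h0 w' :=
      ⟨(hred.2.1 (e0, h0) (List.mem_cons_self)).2,
        fun p hp => hred.2.1 p (List.mem_cons_of_mem _ hp), List.IsChain.tail hred.2.2⟩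
    have heq' : x' * hnnProd t h0 w' = hnnProd t h0 w' * v := by
      have e1 : hnnProd t g₀ ((e0, h0) :: w') = g₀ * t ^ e0 * hnnProd t h0 w' := by
        simp [hnnProd, mul_assoc]
      rw [e1] at heq
      have h2 : x' * hnnProd t h0 w'
          = (g₀ * t ^ e0)⁻¹ * (u * (g₀ * t ^ e0 * hnnProd t h0 w')) := by
        rw [hx'_def, ha_def]; group
      rw [h2, heq]
      group
    obtain ⟨c', hmem', hc0', hclast', hcconj', hrel'⟩ :=
      hnn_chain_aux hH w' h0 x' v hredtail hx'u hv heq'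
    refine ⟨fun i => match i with | 0 => u | 1 => a | (k + 2) => c' k, ?_, rfl, ?_, ?_, ?_⟩
    · intro i hi
      match i, hi with
      | 0, _ => exact hu
      | 1, _ => exact toCsub_subset_union Cm Cp (-e0) ha
      | (k + 2), hi =>
        exact hmem' k (by simp at hi; omega)
    · have h1 : 2 * ((e0, h0) :: w').length + 1 = (2 * w'.length + 1) + 2 := by
        simp; omega
      rw [h1]
      exact hclast'
    · show u = g₀ * a * g₀⁻¹
      rw [ha_def]; group
    · intro j hj
      match j, hj with
      | 0, _ =>
        constructor
        · show a = t ^ e0 * c' 0 * (t ^ e0)⁻¹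
          rw [hc0', hx'_def]; group
        · show c' 0 = h0 * c' 1 * h0⁻¹
          exact hcconj'
      | (j' + 1), hj =>
        have hj' : j' < w'.length := by simpa using hj
        have h1 : 2 * (j' + 1) + 1 = (2 * j' + 1) + 2 := by omega
        have h2 : 2 * (j' + 1) + 2 = (2 * j' + 2) + 2 := by omega
        have h3 : 2 * (j' + 1) + 3 = (2 * j' + 3) + 2 := by omega
        have hget : ((e0, h0) :: w').get ⟨j' + 1, hj⟩ = w'.get ⟨j', hj'⟩ := rfl
        rw [h1, h2, h3, hget]
        exact hrel' j' hj'

/-- Commutativity theorem in an HNN extension, case (i): if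
`x ∈ C_{+1} ∪ C_{-1}` commutes with `y`, of reduced form
`y₁ t^{ε₁} y₂ ⋯ yₙ t^{εₙ} y_{n+1}`, then there is a chain
`(c_0, …, c_{2n+1})` in `C_{+1} ∪ C_{-1}` with `c_0 = c_{2n+1} = x`, in which
`c_i` and `c_{i+1}` are conjugate by `y_{i/2+1}` for `i` even, and by
`t^{ε_{(i-1)/2+1}}` for `i` odd.
Here `y1 = y₁`, `ys j = y_{j+2}` and `ε j = ε_{j+1}`. -/
theorem hnn_commute_with_associated_subgroup (A Cm Cp : Subgroup Γ) (t : Γ)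
    (hH : IsHNN A Cm Cp t) (x y : Γ) (n : ℕ)
    (y1 : Γ) (ε : Fin n → ℤ) (ys : Fin n → Γ)
    (hred : HNNReducedWord A Cm Cp y1 (List.ofFn fun i => (ε i, ys i)))
    (hprod : hnnProd t y1 (List.ofFn fun i => (ε i, ys i)) = y)
    (hx : x ∈ (Cp : Set Γ) ∪ (Cm : Set Γ))
    (hcomm : x * y = y * x) :
    ∃ c : ℕ → Γ, (∀ i ≤ 2 * n + 1, c i ∈ (Cp : Set Γ) ∪ (Cm : Set Γ)) ∧
      c 0 = x ∧ c (2 * n + 1) = x ∧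
      c 0 = y1 * c 1 * y1⁻¹ ∧
      ∀ j : Fin n,
        c (2 * (j : ℕ) + 1) = t ^ ε j * c (2 * (j : ℕ) + 2) * (t ^ ε j)⁻¹ ∧
        c (2 * (j : ℕ) + 2) = ys j * c (2 * (j : ℕ) + 3) * (ys j)⁻¹ := by
  subst hprod
  obtain ⟨c, hmem, hc0, hclast, hconj, hrel⟩ :=
    hnn_chain_aux hH (List.ofFn fun i => (ε i, ys i)) y1 x x hred hx hx hcomm
  refine ⟨c, ?_, hc0, ?_, hconj, ?_⟩
  · intro i hi
    exact hmem i (by simpa using hi)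
  · have h1 : 2 * (List.ofFn fun i => (ε i, ys i)).length + 1 = 2 * n + 1 := by simp
    rw [← h1]; exact hclast
  · intro j
    have hj : (j : ℕ) < (List.ofFn fun i => (ε i, ys i)).length := by simp
    have hget : (List.ofFn fun i => (ε i, ys i)).get ⟨(j : ℕ), hj⟩ = (ε j, ys j) := by
      simp
    have := hrel (j : ℕ) hj
    rw [hget] at this
    exact this
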